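/- A forward metric space that is forward boundedly compact (every closed bounded forward ball is compact) is forward complete. -/

import Mathlib

open Set Filter Topology

variable {X : Type*}

/-- Forward ball of an (possibly asymmetric) distance function. -/
def fwdBall (d : X → X → ℝ) (x : X) (r : ℝ) : Set X := {y | d x y < r}

/-- Backward ball. -/
def bwdBall (d : X → X → ℝ) (x : X) (r : ℝ) : Set X := {y | d y x < r}

/-- The forward topology, generated by forward balls. -/
def fwdTop (d : X → X → ℝ) : TopologicalSpace X :=
  TopologicalSpace.generateFrom {s | ∃ x r, s = fwdBall d x r}

/-- The backward topology, generated by backward balls. -/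
def bwdTop (d : X → X → ℝ) : TopologicalSpace X :=
  TopologicalSpace.generateFrom {s | ∃ x r, s = bwdBall d x r}

/-- `d` is an irreversible metric: nonnegative, vanishing exactly on the diagonal, and
satisfying the triangle inequality (symmetry is not required). -/
def IsIrrevMetric (d : X → X → ℝ) : Prop :=
  (∀ x y, 0 ≤ d x y) ∧ (∀ x y, d x y = 0 ↔ x = y) ∧ ∀ x y z, d x z ≤ d x y + d y z

/-- `(X, star, d)` is a pointed forward `Θ`-metric space: `Θ` is nondecreasing with values ≥ 1
and the reversibility of the closure (in the forward topology) of each forward ball of radius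
`r > 0` about `star` is bounded by `Θ r`. -/
def PointedForwardTheta (d : X → X → ℝ) (star : X) (Θ : ℝ → ℝ) : Prop :=
  Monotone Θ ∧ (∀ r, 1 ≤ Θ r) ∧
  ∀ r > 0, ∀ x ∈ @closure X (fwdTop d) (fwdBall d star r),
    ∀ y ∈ @closure X (fwdTop d) (fwdBall d star r), d x y ≤ Θ r * d y x

/-- A forward Cauchy sequence. -/
def FwdCauchy (d : X → X → ℝ) (u : ℕ → X) : Prop :=
  ∀ ε > (0:ℝ), ∃ N : ℕ, ∀ i j : ℕ, N < i → i ≤ j → d (u i) (u j) < ε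

/-- A backward Cauchy sequence. -/
def BwdCauchy (d : X → X → ℝ) (u : ℕ → X) : Prop :=
  ∀ ε > (0:ℝ), ∃ N : ℕ, ∀ i j : ℕ, N < i → i ≤ j → d (u j) (u i) < ε

/-- Forward completeness: every forward Cauchy sequence converges in the forward topology. -/
def FwdComplete (d : X → X → ℝ) : Prop :=
  ∀ u : ℕ → X, FwdCauchy d u → ∃ x : X, Tendsto u atTop (@nhds X (fwdTop d) x)

/-- Backward completeness: every backward Cauchy sequence converges in the forward topology. -/
def BwdComplete (d : X → X → ℝ) : Prop :=
  ∀ u : ℕ → X, BwdCauchy d u → ∃ x : X, Tendsto u atTop (@nhds X (fwdTop d) x)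


lemma ball_open (d : X → X → ℝ) (x : X) (r : ℝ) :
    (fwdTop d).IsOpen (fwdBall d x r) :=
  TopologicalSpace.GenerateOpen.basic _ ⟨x, r, rfl⟩

lemma exists_ball_subset (d : X → X → ℝ) (hd : IsIrrevMetric d) {U : Set X}
    (hU : (fwdTop d).IsOpen U) : ∀ x ∈ U, ∃ ε > (0:ℝ), fwdBall d x ε ⊆ U := by
  induction hU with
  | basic s hs =>
      obtain ⟨z, r, rfl⟩ := hs
      intro x hx
      refine ⟨r - d z x, by simpa [fwdBall, sub_pos] using hx, ?_⟩
      intro y hy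
      have := hd.2.2 z x y
      simp only [fwdBall, mem_setOf_eq] at *
      linarith
  | univ => exact fun x _ => ⟨1, one_pos, fun _ _ => trivial⟩
  | inter s t _ _ ihs iht =>
      intro x hx
      obtain ⟨ε1, hε1, h1⟩ := ihs x hx.1
      obtain ⟨ε2, hε2, h2⟩ := iht x hx.2
      refine ⟨min ε1 ε2, lt_min hε1 hε2, fun y hy => ?_⟩
      have hy' : d x y < min ε1 ε2 := hy
      exact ⟨h1 (show d x y < ε1 from lt_of_lt_of_le hy' (min_le_left _ _)),
        h2 (show d x y < ε2 from lt_of_lt_of_le hy' (min_le_right _ _))⟩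
  | sUnion S _ ih =>
      rintro x ⟨s, hs, hxs⟩
      obtain ⟨ε, hε, h⟩ := ih s hs x hxs
      exact ⟨ε, hε, fun y hy => ⟨s, hs, h hy⟩⟩

/-- A forward metric space that is forward boundedly compact (every closed
forward ball is compact in the forward topology) is forward complete. -/
theorem stmt3 (d : X → X → ℝ) (hd : IsIrrevMetric d) (star : X) (Θ : ℝ → ℝ)
    (hΘ : PointedForwardTheta d star Θ)
    (hbc : ∀ (x : X) (r : ℝ), @IsCompact X (fwdTop d) (@closure X (fwdTop d) (fwdBall d x r))) :
    FwdComplete d := by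
  intro u hu
  letI : TopologicalSpace X := fwdTop d
  obtain ⟨N0, hN0⟩ := hu 1 one_pos
  set c := u (N0 + 1) with hc
  have hmem : ∀ᶠ n in atTop, u n ∈ closure (fwdBall d c 1) := by
    filter_upwards [eventually_ge_atTop (N0 + 1)] with n hn
    exact subset_closure (hN0 (N0 + 1) n (by omega) hn)
  have hle : map u atTop ≤ 𝓟 (closure (fwdBall d c 1)) := by
    rwa [le_principal_iff, mem_map]
  obtain ⟨x, _, hcl⟩ := (hbc c 1).exists_clusterPt hle
  refine ⟨x, ?_⟩
  rw [tendsto_nhds]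
  intro U hUopen hxU
  obtain ⟨ε, hε, hball⟩ := exists_ball_subset d hd hUopen x hxU
  obtain ⟨N, hN⟩ := hu (ε / 2) (by linarith)
  have hV : fwdBall d x (ε / 2) ∈ 𝓝 x := by
    have hop : IsOpen (fwdBall d x (ε / 2)) := ball_open d x (ε / 2)
    refine hop.mem_nhds ?_
    show d x x < ε / 2
    rw [(hd.2.1 x x).2 rfl]
    linarith
  have hne := clusterPt_iff_nonempty.mp hcl hV (image_mem_map (Ici_mem_atTop (N + 1)))
  obtain ⟨y, hyV, i, hiN, rfl⟩ := hne
  refine eventually_atTop.2 ⟨i, fun j hj => hball ?_⟩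
  have hi : d x (u i) < ε / 2 := hyV
  have hiV : N + 1 ≤ i := hiN
  have h1 : d (u i) (u j) < ε / 2 := hN i j (by omega) hj
  have := hd.2.2 x (u i) (u j)
  simp only [fwdBall, mem_setOf_eq]
  linarith
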